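/- Let Q_L be a complex n×n matrix satisfying: (i) Q_L commutes with its entrywise conjugate Q̄_L, and (ii) Re(Q_L) and Im(Q_L) are diagonalizable with real eigenvalues. Define Q_B = Q_L·(I + (1/2)(I - Q̄_L·Q_L)). Then the spectral radius ρ(Q_B) ≤ 1 if and only if ρ(Q_L) ≤ 2. -/

import Mathlib

open Matrix

/-- Real part of a complex matrix, entrywise. -/
def matRe {n : ℕ} (Q : Matrix (Fin n) (Fin n) ℂ) : Matrix (Fin n) (Fin n) ℝ :=
  fun i j => (Q i j).re

/-- Imaginary part of a complex matrix, entrywise. -/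
def matIm {n : ℕ} (Q : Matrix (Fin n) (Fin n) ℂ) : Matrix (Fin n) (Fin n) ℝ :=
  fun i j => (Q i j).im

/-- Entrywise complex conjugate of a complex matrix. -/
def matConj {n : ℕ} (Q : Matrix (Fin n) (Fin n) ℂ) : Matrix (Fin n) (Fin n) ℂ :=
  Q.map (starRingEnd ℂ)

/-- A real square matrix is diagonalizable (over ℝ, hence with real eigenvalues). -/
def IsDiagonalizableR {n : ℕ} (X : Matrix (Fin n) (Fin n) ℝ) : Prop :=
  ∃ P D : Matrix (Fin n) (Fin n) ℝ, IsUnit P.det ∧ D.IsDiag ∧ X = P * D * P⁻¹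


section BfeccHelpers

open Polynomial Complex



lemma bfecc_real_iff {r : ℝ} (hr : 0 ≤ r) :
    r * |1 + (1 - r ^ 2) / 2| ≤ 1 ↔ r ≤ 2 := by
  constructor
  · intro h
    by_contra hc
    push_neg at hc
    have h3 : 1 + (1 - r ^ 2) / 2 < 0 := by nlinarith
    rw [abs_of_neg h3] at h
    nlinarith [mul_pos (by linarith : (0:ℝ) < r - 2) (by nlinarith : (0:ℝ) < (r + 1) ^ 2)]
  · intro h
    rcases le_total (1 + (1 - r ^ 2) / 2) 0 with h0 | h0
    · rw [abs_of_nonpos h0]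
      nlinarith [mul_nonneg (by linarith : (0:ℝ) ≤ 2 - r) (sq_nonneg (r + 1))]
    · rw [_root_.abs_of_nonneg h0]
      nlinarith [mul_nonneg (sq_nonneg (r - 1)) (by linarith : (0:ℝ) ≤ r + 2)]

lemma bfecc_scalar_iff (a b : ℝ) :
    ‖((a : ℂ) + Complex.I * b) * (1 + (1 / 2 : ℂ) *
      (1 - ((a : ℂ) - Complex.I * b) * ((a : ℂ) + Complex.I * b)))‖ ≤ 1
      ↔ ‖(a : ℂ) + Complex.I * b‖ ≤ 2 := by
  set z : ℂ := (a : ℂ) + Complex.I * b with hz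
  have hconj : (a : ℂ) - Complex.I * b = starRingEnd ℂ z := by
    simp [hz, Complex.ext_iff]
  have h1 : starRingEnd ℂ z * z = ((‖z‖ ^ 2 : ℝ) : ℂ) := by
    rw [← Complex.normSq_eq_conj_mul_self]
    norm_cast
    rw [Complex.sq_norm]
  have h2 : (1 + (1 / 2 : ℂ) * (1 - ((a : ℂ) - Complex.I * b) * z))
      = (((1 + (1 - ‖z‖ ^ 2) / 2 : ℝ)) : ℂ) := by
    rw [hconj, h1]; push_cast; ring
  rw [h2, norm_mul, Complex.norm_real]
  exact bfecc_real_iff (norm_nonneg z)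



/-- If a module is spanned by submodules on which `T` acts by scalars, then any eigenvalue of `T`
is one of those scalars attained on a nonzero submodule. -/
lemma bfecc_key_exists {V : Type*} [AddCommGroup V] [Module ℂ V] {σ : Type*}
    (S : σ → Submodule ℂ V) (hTop : (⨆ χ, S χ) = ⊤)
    (T : Module.End ℂ V) (c : σ → ℂ)
    (hT : ∀ χ, ∀ v ∈ S χ, T v = c χ • v)
    {w : V} (hw : w ≠ 0) {μ : ℂ} (hμw : T w = μ • w) :
    ∃ χ, S χ ≠ ⊥ ∧ μ = c χ := by
  by_contra hcon
  push_neg at hcon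
  set Sset : Set ℂ := {ν : ℂ | ∃ χ, S χ ≠ ⊥ ∧ c χ = ν} with hSset
  have hsub : ∀ χ, S χ ≤ ⨆ ν ∈ Sset, Module.End.eigenspace T ν := by
    intro χ
    rcases eq_or_ne (S χ) ⊥ with h | h
    · rw [h]; exact bot_le
    · refine le_trans ?_ (le_biSup _ (show c χ ∈ Sset from ⟨χ, h, rfl⟩))
      intro v hv
      exact Module.End.mem_eigenspace_iff.mpr (hT χ v hv)
  have htop2 : ⨆ ν ∈ Sset, Module.End.eigenspace T ν = ⊤ :=
    top_unique (hTop ▸ iSup_le hsub)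
  have hμ : μ ∉ Sset := by
    rintro ⟨χ, h1, h2⟩
    exact hcon χ h1 h2.symm
  have hdis := (Module.End.eigenspaces_iSupIndep T).disjoint_biSup hμ
  rw [htop2, disjoint_top] at hdis
  have hwmem : w ∈ Module.End.eigenspace T μ := Module.End.mem_eigenspace_iff.mpr hμw
  rw [hdis] at hwmem
  exact hw (Submodule.mem_bot ℂ |>.mp hwmem)

lemma bfecc_conj_pow {m : ℕ} (Q A : Matrix (Fin m) (Fin m) ℂ) (h : IsUnit Q.det) (k : ℕ) :
    (Q * A * Q⁻¹) ^ k = Q * A ^ k * Q⁻¹ := by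
  induction k with
  | zero => simp [Matrix.mul_nonsing_inv _ h]
  | succ k ih =>
    rw [pow_succ, ih, pow_succ]
    rw [Matrix.mul_assoc (Q * A ^ k) Q⁻¹ _, ← Matrix.mul_assoc Q⁻¹ _ _,
      ← Matrix.mul_assoc Q⁻¹ Q A, Matrix.nonsing_inv_mul _ h, Matrix.one_mul]
    rw [← Matrix.mul_assoc, ← Matrix.mul_assoc]

lemma bfecc_aeval_conj {m : ℕ} (Q A : Matrix (Fin m) (Fin m) ℂ) (h : IsUnit Q.det) (q : ℂ[X]) :
    Polynomial.aeval (Q * A * Q⁻¹) q = Q * Polynomial.aeval A q * Q⁻¹ := by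
  induction q using Polynomial.induction_on' with
  | add p q hp hq => rw [map_add, map_add, hp, hq, Matrix.mul_add, Matrix.add_mul]
  | monomial k c =>
    rw [Polynomial.aeval_monomial, Polynomial.aeval_monomial, bfecc_conj_pow Q A h,
      ← Algebra.smul_def, ← Algebra.smul_def, Matrix.mul_smul, Matrix.smul_mul]




lemma bfecc_diag_transfer {m : ℕ} {A : Matrix (Fin m) (Fin m) ℝ} (hA : IsDiagonalizableR A) :
    ∃ (Q : Matrix (Fin m) (Fin m) ℂ) (d : Fin m → ℝ), IsUnit Q.det ∧
      A.map Complex.ofReal = Q * Matrix.diagonal (fun i => (d i : ℂ)) * Q⁻¹ := by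
  obtain ⟨P, D, hdet, hdiag, hAeq⟩ := hA
  have hdetc : IsUnit (P.map Complex.ofReal).det := by
    have h0 : (P.map Complex.ofReal).det = Complex.ofRealHom P.det :=
      (RingHom.map_det Complex.ofRealHom P).symm
    rw [h0]
    simp only [isUnit_iff_ne_zero, ne_eq, Complex.ofRealHom_eq_coe, Complex.ofReal_eq_zero]
    exact isUnit_iff_ne_zero.mp hdet
  refine ⟨P.map Complex.ofReal, fun i => D i i, hdetc, ?_⟩
  have h1 : A * P = P * D := by
    rw [hAeq]; exact Matrix.nonsing_inv_mul_cancel_right _ _ hdet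
  have h2 : A.map Complex.ofReal * P.map Complex.ofReal
      = P.map Complex.ofReal * D.map Complex.ofReal := by
    have h2' := congrArg (fun M : Matrix (Fin m) (Fin m) ℝ => M.map (Complex.ofRealHom : ℝ →+* ℂ)) h1
    simp only [Matrix.map_mul] at h2'
    exact h2'
  have hD : D.map Complex.ofReal = Matrix.diagonal (fun i => ((D i i : ℝ) : ℂ)) := by
    ext i j
    rcases eq_or_ne i j with rfl | hne
    · simp [Matrix.map_apply]
    · simp [Matrix.map_apply, Matrix.diagonal_apply_ne _ hne, hdiag hne]
  calc A.map Complex.ofReal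
      = A.map Complex.ofReal * P.map Complex.ofReal * (P.map Complex.ofReal)⁻¹ :=
        (Matrix.mul_nonsing_inv_cancel_right _ _ hdetc).symm
    _ = P.map Complex.ofReal * Matrix.diagonal (fun i => ((D i i : ℝ) : ℂ))
          * (P.map Complex.ofReal)⁻¹ := by rw [h2, hD]

lemma bfecc_spectrum_conj {m : ℕ} (Q A : Matrix (Fin m) (Fin m) ℂ) (h : IsUnit Q.det) :
    spectrum ℂ (Q * A * Q⁻¹) = spectrum ℂ A := by
  have hU : IsUnit Q := Matrix.isUnit_iff_isUnit_det Q |>.mpr h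
  have h1 : (hU.unit : Matrix (Fin m) (Fin m) ℂ) = Q := hU.unit_spec
  have h2 : ((hU.unit⁻¹ : (Matrix (Fin m) (Fin m) ℂ)ˣ) : Matrix (Fin m) (Fin m) ℂ) = Q⁻¹ := by
    rw [Matrix.coe_units_inv, h1]
  calc spectrum ℂ (Q * A * Q⁻¹)
      = spectrum ℂ ((hU.unit : Matrix (Fin m) (Fin m) ℂ) * A
          * ((hU.unit⁻¹ : (Matrix (Fin m) (Fin m) ℂ)ˣ) : Matrix (Fin m) (Fin m) ℂ)) := by
        rw [h1, h2]
    _ = spectrum ℂ A := spectrum.units_conjugate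

lemma bfecc_spectrum_real {m : ℕ} {A : Matrix (Fin m) (Fin m) ℝ} (hA : IsDiagonalizableR A)
    {μ : ℂ} (hμ : μ ∈ spectrum ℂ (A.map Complex.ofReal)) : ∃ r : ℝ, μ = r := by
  obtain ⟨Q, d, hdet, heq⟩ := bfecc_diag_transfer hA
  rw [heq, bfecc_spectrum_conj Q _ hdet, spectrum_diagonal] at hμ
  obtain ⟨i, hi⟩ := hμ
  exact ⟨d i, hi.symm⟩

lemma bfecc_semisimple {m : ℕ} {A : Matrix (Fin m) (Fin m) ℝ} (hA : IsDiagonalizableR A) :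
    Module.End.IsFinitelySemisimple (Matrix.toLinAlgEquiv' (A.map Complex.ofReal)) := by
  classical
  obtain ⟨Q, d, hdet, heq⟩ := bfecc_diag_transfer hA
  set s : Finset ℂ := Finset.image (fun i => (d i : ℂ)) Finset.univ with hs
  set p : ℂ[X] := ∏ μ ∈ s, (Polynomial.X - Polynomial.C μ) with hp
  have hsq : Squarefree p :=
    (Polynomial.separable_prod_X_sub_C_iff'.mpr (fun x _ y _ h => h)).squarefree
  have haevaldiag : ∀ q : ℂ[X], Polynomial.aeval (Matrix.diagonal (fun i => (d i : ℂ))) q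
      = Matrix.diagonal (fun i => Polynomial.eval ((d i : ℂ)) q) := by
    intro q
    induction q using Polynomial.induction_on' with
    | add p q hp hq =>
      rw [map_add, hp, hq, Matrix.diagonal_add]
      simp only [Polynomial.eval_add]
    | monomial k c =>
      rw [Polynomial.aeval_monomial, Matrix.algebraMap_eq_diagonal, Matrix.diagonal_pow,
        Matrix.diagonal_mul_diagonal]
      congr 1 with i
      simp [Polynomial.eval_monomial]
  have hdiagzero : Polynomial.aeval (Matrix.diagonal (fun i => (d i : ℂ))) p = 0 := by
    rw [haevaldiag]
    have : ∀ i, Polynomial.eval ((d i : ℂ)) p = 0 := by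
      intro i
      rw [hp, Polynomial.eval_prod]
      refine Finset.prod_eq_zero (Finset.mem_image_of_mem _ (Finset.mem_univ i)) ?_
      simp
    simp [this]
  have hmatzero : Polynomial.aeval (A.map Complex.ofReal) p = 0 := by
    rw [heq, bfecc_aeval_conj Q _ hdet, hdiagzero, Matrix.mul_zero, Matrix.zero_mul]
  have hendzero : Polynomial.aeval (Matrix.toLinAlgEquiv' (A.map Complex.ofReal)) p = 0 := by
    rw [show Matrix.toLinAlgEquiv' (A.map Complex.ofReal)
        = Matrix.toLinAlgEquiv'.toAlgHom (A.map Complex.ofReal) from rfl,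
      Polynomial.aeval_algHom_apply, hmatzero, map_zero]
  exact Module.End.IsSemisimple.isFinitelySemisimple (Module.End.isSemisimple_of_squarefree_aeval_eq_zero hsq hendzero)

end BfeccHelpers

theorem stmt_3 {n : ℕ} (QL : Matrix (Fin n) (Fin n) ℂ)
    (hcomm : matConj QL * QL = QL * matConj QL)
    (hX : IsDiagonalizableR (matRe QL)) (hY : IsDiagonalizableR (matIm QL))
    (QB : Matrix (Fin n) (Fin n) ℂ)
    (hQB : QB = QL * (1 + (1 / 2 : ℂ) • (1 - matConj QL * QL))) :
    (∀ μ ∈ spectrum ℂ QB, ‖μ‖ ≤ 1) ↔ (∀ μ ∈ spectrum ℂ QL, ‖μ‖ ≤ 2) := by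
  classical
  set X : Matrix (Fin n) (Fin n) ℂ := (matRe QL).map Complex.ofReal with hXdef
  set Y : Matrix (Fin n) (Fin n) ℂ := (matIm QL).map Complex.ofReal with hYdef
  have hQLXY : QL = X + Complex.I • Y := by
    ext i j
    simp [hXdef, hYdef, matRe, matIm, Matrix.map_apply, Complex.ext_iff]
  have hCXY : matConj QL = X - Complex.I • Y := by
    ext i j
    simp [hXdef, hYdef, matConj, matRe, matIm, Matrix.map_apply, Complex.ext_iff]
  -- commutation of X and Y
  have hXY : X * Y = Y * X := by
    have h := hcomm
    rw [hCXY, hQLXY] at h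
    simp only [Matrix.sub_mul, Matrix.mul_add, Matrix.add_mul, Matrix.mul_sub,
      Matrix.smul_mul, Matrix.mul_smul, smul_smul] at h
    have h0 := sub_eq_zero.mpr h
    have h2 : ((2:ℂ) * Complex.I) • (X * Y - Y * X) = 0 := by
      rw [← h0]; module
    have h3 : X * Y - Y * X = 0 := by
      rcases smul_eq_zero.mp h2 with h4 | h4
      · exact absurd h4 (by simp [Complex.I_ne_zero])
      · exact h4
    exact sub_eq_zero.mp h3
  -- endomorphisms
  set fX : Module.End ℂ (Fin n → ℂ) := Matrix.toLinAlgEquiv' X with hfX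
  set fY : Module.End ℂ (Fin n → ℂ) := Matrix.toLinAlgEquiv' Y with hfY
  have hfcomm : Commute fX fY := by
    show fX * fY = fY * fX
    rw [hfX, hfY, ← _root_.map_mul, ← _root_.map_mul, hXY]
  have hssX : Module.End.IsFinitelySemisimple fX := bfecc_semisimple hX
  have hssY : Module.End.IsFinitelySemisimple fY := bfecc_semisimple hY
  set f : Bool → Module.End ℂ (Fin n → ℂ) := fun b => bif b then fX else fY with hf
  have hPair : Pairwise fun i j => Commute (f i) (f j) := by
    intro i j hij
    cases i <;> cases j
    · exact (hij rfl).elim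
    · exact hfcomm.symm
    · exact hfcomm
    · exact (hij rfl).elim
  have hTopMax : ⨆ χ : Bool → ℂ, ⨅ b, (f b).maxGenEigenspace (χ b) = ⊤ :=
    Module.End.iSup_iInf_maxGenEigenspace_eq_top_of_iSup_maxGenEigenspace_eq_top_of_commute f
      hPair (fun _ => Module.End.iSup_maxGenEigenspace_eq_top _)
  set S : (Bool → ℂ) → Submodule ℂ (Fin n → ℂ) :=
    fun χ => ⨅ b, Module.End.eigenspace (f b) (χ b) with hS
  have hmax : ∀ (χ : Bool → ℂ) (b : Bool),
      (f b).maxGenEigenspace (χ b) = Module.End.eigenspace (f b) (χ b) := by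
    intro χ b
    cases b
    · exact hssY.maxGenEigenspace_eq_eigenspace _
    · exact hssX.maxGenEigenspace_eq_eigenspace _
  have hTop : ⨆ χ, S χ = ⊤ := by
    rw [← hTopMax]
    exact iSup_congr fun χ => iInf_congr fun b => (hmax χ b).symm
  -- scalar data
  set lam : (Bool → ℂ) → ℂ := fun χ => χ true + Complex.I * χ false with hlam
  set lamb : (Bool → ℂ) → ℂ := fun χ => χ true - Complex.I * χ false with hlamb
  set gB : (Bool → ℂ) → ℂ :=
    fun χ => lam χ * (1 + (1 / 2 : ℂ) * (1 - lamb χ * lam χ)) with hgB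
  -- actions on joint eigenspaces
  have hXv : ∀ (χ : Bool → ℂ) (v : Fin n → ℂ), v ∈ S χ → X *ᵥ v = χ true • v := by
    intro χ v hv
    have := Module.End.mem_eigenspace_iff.mp (Submodule.mem_iInf _ |>.mp hv true)
    rwa [show f true = fX from rfl, hfX, Matrix.toLinAlgEquiv'_apply] at this
  have hYv : ∀ (χ : Bool → ℂ) (v : Fin n → ℂ), v ∈ S χ → Y *ᵥ v = χ false • v := by
    intro χ v hv
    have := Module.End.mem_eigenspace_iff.mp (Submodule.mem_iInf _ |>.mp hv false)
    rwa [show f false = fY from rfl, hfY, Matrix.toLinAlgEquiv'_apply] at this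
  have hQLv : ∀ (χ : Bool → ℂ) (v : Fin n → ℂ), v ∈ S χ → QL *ᵥ v = lam χ • v := by
    intro χ v hv
    rw [hQLXY, Matrix.add_mulVec, Matrix.smul_mulVec, hXv χ v hv, hYv χ v hv,
      smul_smul, ← add_smul]
  have hCv : ∀ (χ : Bool → ℂ) (v : Fin n → ℂ), v ∈ S χ →
      matConj QL *ᵥ v = lamb χ • v := by
    intro χ v hv
    rw [hCXY, Matrix.sub_mulVec, Matrix.smul_mulVec, hXv χ v hv, hYv χ v hv,
      smul_smul, ← sub_smul]
  have hQBv : ∀ (χ : Bool → ℂ) (v : Fin n → ℂ), v ∈ S χ → QB *ᵥ v = gB χ • v := by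
    intro χ v hv
    rw [hQB, ← Matrix.mulVec_mulVec]
    have hM : (1 + (1 / 2 : ℂ) • (1 - matConj QL * QL)) *ᵥ v
        = (1 + (1 / 2 : ℂ) * (1 - lamb χ * lam χ)) • v := by
      rw [Matrix.add_mulVec, Matrix.one_mulVec, Matrix.smul_mulVec, Matrix.sub_mulVec,
        Matrix.one_mulVec, ← Matrix.mulVec_mulVec, hQLv χ v hv, Matrix.mulVec_smul,
        hCv χ v hv, smul_smul]
      module
    rw [hM, Matrix.mulVec_smul, hQLv χ v hv, smul_smul, hgB]
    congr 1
    ring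
  -- spectra via the algebra equivalence
  have hspec : ∀ M : Matrix (Fin n) (Fin n) ℂ,
      spectrum ℂ (Matrix.toLinAlgEquiv' M) = spectrum ℂ M :=
    fun M => AlgEquiv.spectrum_eq _ M
  -- claim C : nonbot joint eigenspaces give actual spectrum members
  have claimC : ∀ χ, S χ ≠ ⊥ → lam χ ∈ spectrum ℂ QL ∧ gB χ ∈ spectrum ℂ QB := by
    intro χ hne
    obtain ⟨v, hv, hv0⟩ := (Submodule.ne_bot_iff _).mp hne
    constructor
    · rw [← hspec QL]
      refine Module.End.hasEigenvalue_iff_mem_spectrum.mp ?_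
      refine Module.End.hasEigenvalue_of_hasEigenvector (x := v) ⟨?_, hv0⟩
      exact Module.End.mem_eigenspace_iff.mpr
        (by rw [Matrix.toLinAlgEquiv'_apply, hQLv χ v hv])
    · rw [← hspec QB]
      refine Module.End.hasEigenvalue_iff_mem_spectrum.mp ?_
      refine Module.End.hasEigenvalue_of_hasEigenvector (x := v) ⟨?_, hv0⟩
      exact Module.End.mem_eigenspace_iff.mpr
        (by rw [Matrix.toLinAlgEquiv'_apply, hQBv χ v hv])
  -- claim D : nonbot joint eigenvalues are real
  have claimD : ∀ χ, S χ ≠ ⊥ → ∃ a b : ℝ, χ true = a ∧ χ false = b := by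
    intro χ hne
    obtain ⟨v, hv, hv0⟩ := (Submodule.ne_bot_iff _).mp hne
    have hXval : χ true ∈ spectrum ℂ X := by
      rw [← hspec X]
      refine Module.End.hasEigenvalue_iff_mem_spectrum.mp ?_
      refine Module.End.hasEigenvalue_of_hasEigenvector (x := v) ⟨?_, hv0⟩
      exact Module.End.mem_eigenspace_iff.mpr
        (by rw [Matrix.toLinAlgEquiv'_apply, hXv χ v hv])
    have hYval : χ false ∈ spectrum ℂ Y := by
      rw [← hspec Y]
      refine Module.End.hasEigenvalue_iff_mem_spectrum.mp ?_
      refine Module.End.hasEigenvalue_of_hasEigenvector (x := v) ⟨?_, hv0⟩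
      exact Module.End.mem_eigenspace_iff.mpr
        (by rw [Matrix.toLinAlgEquiv'_apply, hYv χ v hv])
    obtain ⟨a, ha⟩ := bfecc_spectrum_real hX hXval
    obtain ⟨b, hb⟩ := bfecc_spectrum_real hY hYval
    exact ⟨a, b, ha, hb⟩
  -- claims A and B : spectrum members come from nonbot joint eigenspaces
  have claimA : ∀ μ ∈ spectrum ℂ QB, ∃ χ, S χ ≠ ⊥ ∧ μ = gB χ := by
    intro μ hμ
    rw [← hspec QB] at hμ
    obtain ⟨w, hw⟩ :=
      (Module.End.hasEigenvalue_iff_mem_spectrum.mpr hμ).exists_hasEigenvector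
    exact bfecc_key_exists S hTop (Matrix.toLinAlgEquiv' QB) gB
      (fun χ v hv => by rw [Matrix.toLinAlgEquiv'_apply, hQBv χ v hv]) hw.right
      (by rw [Matrix.toLinAlgEquiv'_apply] at *; exact hw.apply_eq_smul)
  have claimB : ∀ μ ∈ spectrum ℂ QL, ∃ χ, S χ ≠ ⊥ ∧ μ = lam χ := by
    intro μ hμ
    rw [← hspec QL] at hμ
    obtain ⟨w, hw⟩ :=
      (Module.End.hasEigenvalue_iff_mem_spectrum.mpr hμ).exists_hasEigenvector
    exact bfecc_key_exists S hTop (Matrix.toLinAlgEquiv' QL) lam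
      (fun χ v hv => by rw [Matrix.toLinAlgEquiv'_apply, hQLv χ v hv]) hw.right
      hw.apply_eq_smul
  -- the scalar equivalence on nonbot components
  have hscalar : ∀ χ, S χ ≠ ⊥ → (‖gB χ‖ ≤ 1 ↔ ‖lam χ‖ ≤ 2) := by
    intro χ hne
    obtain ⟨a, b, ha, hb⟩ := claimD χ hne
    rw [hgB, hlam, hlamb]
    simp only [ha, hb]
    exact bfecc_scalar_iff a b
  constructor
  · intro h1 μ hμ
    obtain ⟨χ, hne, rfl⟩ := claimB μ hμ
    exact (hscalar χ hne).mp (h1 _ (claimC χ hne).2)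
  · intro h1 μ hμ
    obtain ⟨χ, hne, rfl⟩ := claimA μ hμ
    exact (hscalar χ hne).mpr (h1 _ (claimC χ hne).1)
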